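/- Let 1 ≤ p ≤ n, N = C(n,p), and 0 ≤ l < k ≤ N be integers, let c > 0, and let κ ∈ P_{p,k} satisfy κ_i ≥ c for all 1 ≤ i ≤ n. Then σ_k(Λ(κ))/σ_l(Λ(κ)) ≥ (C(N,k)/C(N,l)) · (p c)^{k−l}. -/

import Mathlib

/-- The `k`-th elementary symmetric function of `x` restricted to the index set `s`. -/
noncomputable def sigmaEOn {ι : Type*} [DecidableEq ι] (s : Finset ι) (k : ℕ) (x : ι → ℝ) : ℝ :=
  ∑ t ∈ s.powersetCard k, ∏ i ∈ t, x i

/-- The `k`-th elementary symmetric function `σ_k(x)`. -/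
noncomputable def sigmaE {ι : Type*} [Fintype ι] [DecidableEq ι] (k : ℕ) (x : ι → ℝ) : ℝ :=
  sigmaEOn Finset.univ k x

/-- The Gårding cone `Γ_k ⊆ ℝ^n`. -/
def gardingCone (n k : ℕ) : Set (Fin n → ℝ) :=
  {lam | ∀ j : ℕ, 1 ≤ j → j ≤ k → 0 < sigmaE j lam}

/-- The vector `Λ(κ) ∈ ℝ^N`, indexed by increasing `p`-multi-indices `I ⊆ {1,…,n}`,
with components `Λ_I(κ) = ∑_{i ∈ I} κ_i`. -/
noncomputable def LamVec (n p : ℕ) (κ : Fin n → ℝ) : {s : Finset (Fin n) // s.card = p} → ℝ :=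
  fun I => ∑ i ∈ I.1, κ i

/-- The `(p,k)`-cone `P_{p,k} ⊆ ℝ^n`. -/
def Pcone (n p k : ℕ) : Set (Fin n → ℝ) :=
  {κ | ∀ j : ℕ, 1 ≤ j → j ≤ k → 0 < sigmaE j (LamVec n p κ)}

/-- Key combinatorial estimate: if all variables are at least `m > 0`, then
`C(M-l, k-l) m^{k-l} σ_l(x) ≤ C(k,l) σ_k(x)` where `M` is the number of variables.
Proof by double counting pairs `t ⊆ s` with `|t| = l`, `|s| = k`. -/
lemma key {ι : Type*} [Fintype ι] [DecidableEq ι] (k l : ℕ) (hlk : l ≤ k)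
    (m : ℝ) (hm : 0 < m) (x : ι → ℝ) (hx : ∀ i, m ≤ x i) :
    ((Fintype.card ι - l).choose (k - l) : ℝ) * m ^ (k - l) * sigmaE l x ≤
      (k.choose l : ℝ) * sigmaE k x := by
  classical
  have hx0 : ∀ i, 0 ≤ x i := fun i => hm.le.trans (hx i)
  -- RHS as a double sum
  have hR : (k.choose l : ℝ) * sigmaE k x
      = ∑ s ∈ Finset.univ.powersetCard k, ∑ t ∈ s.powersetCard l, ∏ i ∈ s, x i := by
    rw [sigmaE, sigmaEOn, Finset.mul_sum]
    refine Finset.sum_congr rfl fun s hs => ?_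
    rw [Finset.sum_const, Finset.card_powersetCard,
      (Finset.mem_powersetCard.mp hs).2, nsmul_eq_mul]
  rw [hR]
  -- swap
  rw [Finset.sum_comm' (t := fun s => s.powersetCard l)
    (s' := fun t => (Finset.univ.powersetCard k).filter (fun s => t ⊆ s))
    (t' := Finset.univ.powersetCard l)
    (by
      intro s t
      simp only [Finset.mem_powersetCard, Finset.mem_filter, Finset.subset_univ, true_and]
      tauto)]
  rw [sigmaE, sigmaEOn, Finset.mul_sum]
  refine Finset.sum_le_sum fun t ht => ?_
  obtain ⟨-, htl⟩ := Finset.mem_powersetCard.mp ht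
  -- inner bound
  have hinj : Set.InjOn (fun u : Finset ι => u ∪ t) ((Finset.univ \ t).powersetCard (k - l)) := by
    intro u hu v hv huv
    obtain ⟨hu1, -⟩ := Finset.mem_powersetCard.mp hu
    obtain ⟨hv1, -⟩ := Finset.mem_powersetCard.mp hv
    have hud : Disjoint u t := Finset.disjoint_right.mpr fun a hat hau =>
      (Finset.mem_sdiff.mp (hu1 hau)).2 hat
    have hvd : Disjoint v t := Finset.disjoint_right.mpr fun a hat hav =>
      (Finset.mem_sdiff.mp (hv1 hav)).2 hat
    have huv' : u ∪ t = v ∪ t := huv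
    have : (u ∪ t) \ t = (v ∪ t) \ t := by rw [huv']
    rwa [Finset.union_sdiff_cancel_right hud, Finset.union_sdiff_cancel_right hvd] at this
  have himg : ((Finset.univ \ t).powersetCard (k - l)).image (fun u => u ∪ t)
      ⊆ (Finset.univ.powersetCard k).filter (fun s => t ⊆ s) := by
    intro s hs
    obtain ⟨u, hu, rfl⟩ := Finset.mem_image.mp hs
    obtain ⟨hu1, hu2⟩ := Finset.mem_powersetCard.mp hu
    have hud : Disjoint u t := Finset.disjoint_right.mpr fun a hat hau =>
      (Finset.mem_sdiff.mp (hu1 hau)).2 hat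
    refine Finset.mem_filter.mpr ⟨Finset.mem_powersetCard.mpr ⟨Finset.subset_univ _, ?_⟩,
      Finset.subset_union_right⟩
    rw [Finset.card_union_of_disjoint hud, hu2, htl]
    omega
  calc ((Fintype.card ι - l).choose (k - l) : ℝ) * m ^ (k - l) * ∏ i ∈ t, x i
      = ∑ u ∈ (Finset.univ \ t).powersetCard (k - l), m ^ (k - l) * ∏ i ∈ t, x i := by
        rw [Finset.sum_const, Finset.card_powersetCard, Finset.card_sdiff_of_subset (Finset.subset_univ t),
          Finset.card_univ, htl, nsmul_eq_mul, mul_assoc]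
    _ ≤ ∑ u ∈ (Finset.univ \ t).powersetCard (k - l), ∏ i ∈ u ∪ t, x i := by
        refine Finset.sum_le_sum fun u hu => ?_
        obtain ⟨hu1, hu2⟩ := Finset.mem_powersetCard.mp hu
        have hud : Disjoint u t := Finset.disjoint_right.mpr fun a hat hau =>
          (Finset.mem_sdiff.mp (hu1 hau)).2 hat
        rw [Finset.prod_union hud]
        gcongr
        · exact Finset.prod_nonneg fun i _ => hx0 i
        calc m ^ (k - l) = ∏ _i ∈ u, m := by rw [Finset.prod_const, hu2]
          _ ≤ ∏ i ∈ u, x i := Finset.prod_le_prod (fun _ _ => hm.le) (fun i _ => hx i)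
    _ = ∑ s ∈ ((Finset.univ \ t).powersetCard (k - l)).image (fun u => u ∪ t),
          ∏ i ∈ s, x i := by
        rw [Finset.sum_image fun u hu v hv h => hinj hu hv h]
    _ ≤ ∑ s ∈ (Finset.univ.powersetCard k).filter (fun s => t ⊆ s), ∏ i ∈ s, x i :=
        Finset.sum_le_sum_of_subset_of_nonneg himg
          (fun s _ _ => Finset.prod_nonneg fun i _ => hx0 i)

/-- if `κ ∈ P_{p,k}` and `κ_i ≥ c > 0` for all `i`, then
`σ_k(Λ(κ))/σ_l(Λ(κ)) ≥ (C(N,k)/C(N,l)) (p c)^{k−l}`. -/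
theorem quotient_lower_bound (n p k l N : ℕ) (hp1 : 1 ≤ p) (hpn : p ≤ n)
    (hN : N = n.choose p) (hlk : l < k) (hkN : k ≤ N)
    (c : ℝ) (hc : 0 < c) (κ : Fin n → ℝ) (hκ : κ ∈ Pcone n p k)
    (hbound : ∀ i : Fin n, c ≤ κ i) :
    (N.choose k : ℝ) / (N.choose l : ℝ) * ((p : ℝ) * c) ^ (k - l) ≤
      sigmaE k (LamVec n p κ) / sigmaE l (LamVec n p κ) := by
  classical
  set x := LamVec n p κ with hxdef
  set σk := sigmaE k x with hσk
  set σl := sigmaE l x with hσl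
  have hM : Fintype.card {s : Finset (Fin n) // s.card = p} = N := by
    rw [Fintype.card_finset_len, Fintype.card_fin, hN]
  have hm : (0 : ℝ) < (p : ℝ) * c := by
    have : (0:ℝ) < (p:ℝ) := by exact_mod_cast hp1
    positivity
  have hx : ∀ I : {s : Finset (Fin n) // s.card = p}, (p : ℝ) * c ≤ x I := by
    intro I
    have h1 : ∑ _i ∈ I.1, c ≤ ∑ i ∈ I.1, κ i := Finset.sum_le_sum fun i _ => hbound i
    rwa [Finset.sum_const, I.2, nsmul_eq_mul] at h1
  have hσlpos : 0 < σl := by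
    rcases Nat.eq_zero_or_pos l with rfl | hl
    · simp [hσl, sigmaE, sigmaEOn]
    · exact hκ l hl hlk.le
  have hkey := key k l hlk.le ((p : ℝ) * c) hm x hx
  rw [hM] at hkey
  have hNl : (0:ℝ) < (N.choose l : ℝ) := by
    exact_mod_cast Nat.choose_pos (le_trans hlk.le hkN)
  have hApos : (0:ℝ) < ((N - l).choose (k - l) : ℝ) := by
    exact_mod_cast Nat.choose_pos (by omega)
  have hid : (N.choose k : ℝ) * (k.choose l : ℝ)
      = (N.choose l : ℝ) * ((N - l).choose (k - l) : ℝ) := by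
    exact_mod_cast congrArg (Nat.cast (R := ℝ)) (Nat.choose_mul (n := N) hlk.le)
  rw [div_mul_eq_mul_div, div_le_div_iff₀ hNl hσlpos]
  have hNk0 : (0:ℝ) ≤ (N.choose k : ℝ) := Nat.cast_nonneg _
  have h2 : ((N - l).choose (k - l) : ℝ) * ((N.choose k : ℝ) * (((p:ℝ)*c) ^ (k-l) * σl))
      ≤ ((N - l).choose (k - l) : ℝ) * ((N.choose l : ℝ) * σk) := by
    calc ((N - l).choose (k - l) : ℝ) * ((N.choose k : ℝ) * (((p:ℝ)*c) ^ (k-l) * σl))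
        = (N.choose k : ℝ) * (((N - l).choose (k - l) : ℝ) * ((p:ℝ)*c) ^ (k-l) * σl) := by
          ring
      _ ≤ (N.choose k : ℝ) * ((k.choose l : ℝ) * σk) :=
          mul_le_mul_of_nonneg_left hkey hNk0
      _ = ((N - l).choose (k - l) : ℝ) * ((N.choose l : ℝ) * σk) := by
          linear_combination σk * hid
  have h3 := le_of_mul_le_mul_left h2 hApos
  calc (N.choose k : ℝ) * ((p:ℝ)*c) ^ (k-l) * σl
      = (N.choose k : ℝ) * (((p:ℝ)*c) ^ (k-l) * σl) := by ring
    _ ≤ (N.choose l : ℝ) * σk := h3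
    _ = σk * (N.choose l : ℝ) := by ring
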